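/- arXiv:math/0206177 — 2 statements merged into one kernel-verified Lean document; each statement's English description precedes it below -/
import Mathlib

section
/- The series Σ_{μ=0}^∞ (h₀ + 2μ)·[Π_{j=0}^{k} Γ(h_j + μ) / Π_{j=1}^{k} Γ(1 + h₀ - h_j + μ)]·(1/μ!)·(-1)^{(k+1)μ} converges absolutely whenever 1 + Re h₀ > (2/(k-1))·Σ_{j=1}^{k} Re h_j, for integers k ≥ 2. -/
open Complex Filter Topology

section aux

lemma aux_norm_div (z : ℂ) :
    Tendsto (fun μ : ℕ => ‖z + μ‖ / (μ:ℝ)) atTop (𝓝 1) := by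
  have h1 : Tendsto (fun μ : ℕ => z / (μ:ℂ) + 1) atTop (𝓝 1) := by
    have : Tendsto (fun μ : ℕ => z / (μ:ℂ)) atTop (𝓝 0) := by
      rw [tendsto_zero_iff_norm_tendsto_zero]
      simp only [norm_div, Complex.norm_natCast]
      exact tendsto_const_nhds.div_atTop (tendsto_natCast_atTop_atTop)
    simpa using this.add tendsto_const_nhds
  have h2 := (continuous_norm.tendsto (1:ℂ)).comp h1
  simp only [norm_one] at h2
  apply h2.congr'
  filter_upwards [eventually_gt_atTop 0] with μ hμ
  have hμ' : (μ:ℂ) ≠ 0 := Nat.cast_ne_zero.mpr hμ.ne'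
  have : z / μ + 1 = (z + μ) / μ := by field_simp
  rw [Function.comp_apply, this, norm_div, Complex.norm_natCast]

lemma aux_norm_pos (w : ℂ) : ∀ᶠ μ : ℕ in atTop, 0 < ‖w + (μ:ℂ)‖ := by
  have := (aux_norm_div w).eventually (eventually_gt_nhds (by norm_num : (1/2:ℝ) < 1))
  filter_upwards [this, eventually_gt_atTop 0] with μ h1 h2
  have h3 : (0:ℝ) < μ := Nat.cast_pos.mpr h2
  nlinarith [(lt_div_iff₀ h3).mp h1]

lemma aux_sq_norm (w : ℂ) (μ : ℕ) : ‖w + (μ:ℂ)‖^2 = (w.re + μ)^2 + w.im^2 := by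
  rw [Complex.sq_norm, Complex.normSq_apply]
  simp [Complex.add_re, Complex.add_im]
  ring

lemma L1 (w z : ℂ) :
    Tendsto (fun μ : ℕ => (μ:ℝ) * (‖w + μ‖ / ‖z + μ‖ - 1)) atTop (𝓝 (w.re - z.re)) := by
  have hut := aux_norm_div w
  have hvt := aux_norm_div z
  set D : ℕ → ℝ := fun μ => (w.re - z.re) * (w.re + z.re + 2*μ) + (w.im^2 - z.im^2) with hD
  have hDlim : Tendsto (fun μ : ℕ => D μ / (μ:ℝ)) atTop (𝓝 ((w.re - z.re)*2)) := by
    have h1 : Tendsto (fun μ : ℕ => (1:ℝ)/(μ:ℝ)) atTop (𝓝 0) :=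
      tendsto_const_nhds.div_atTop tendsto_natCast_atTop_atTop
    have h2 : Tendsto (fun μ : ℕ => (w.re - z.re) * ((w.re + z.re) * (1/(μ:ℝ)) + 2)
        + (w.im^2 - z.im^2) * (1/(μ:ℝ))) atTop
        (𝓝 ((w.re - z.re)*((w.re+z.re)*0+2) + (w.im^2-z.im^2)*0)) :=
      ((tendsto_const_nhds.mul ((tendsto_const_nhds.mul h1).add tendsto_const_nhds)).add
        (tendsto_const_nhds.mul h1))
    simp only [mul_zero, zero_add, add_zero] at h2
    apply h2.congr'
    filter_upwards [eventually_gt_atTop 0] with μ hμ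
    have : (μ:ℝ) ≠ 0 := Nat.cast_ne_zero.mpr hμ.ne'
    field_simp [hD]
    simp only [hD]; ring
  have hmain : Tendsto (fun μ : ℕ =>
      (D μ / (μ:ℝ)) / ((‖z + μ‖/(μ:ℝ)) * (‖w + μ‖/(μ:ℝ) + ‖z + μ‖/(μ:ℝ)))) atTop
      (𝓝 ((w.re - z.re)*2 / (1 * (1 + 1)))) :=
    hDlim.div ((hvt.mul (hut.add hvt))) (by norm_num)
  have he : ((w.re - z.re)*2 / (1 * (1 + 1)) : ℝ) = w.re - z.re := by ring
  rw [he] at hmain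
  apply hmain.congr'
  filter_upwards [aux_norm_pos w, aux_norm_pos z, eventually_gt_atTop 0] with μ hw hz hμ
  have hμ' : (0:ℝ) < μ := Nat.cast_pos.mpr hμ
  have hD2 : ‖w + (μ:ℂ)‖^2 - ‖z + (μ:ℂ)‖^2 = D μ := by
    rw [aux_sq_norm, aux_sq_norm, hD]; ring
  set A := ‖w + (μ:ℂ)‖ with hA
  set B := ‖z + (μ:ℂ)‖ with hB
  have hsum : 0 < A + B := by linarith
  have hBne : B ≠ 0 := hz.ne'
  have hμne : (μ:ℝ) ≠ 0 := hμ'.ne'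
  have hsne : A + B ≠ 0 := hsum.ne'
  simp only [← hD2]
  field_simp
  ring

-- if μ(f-1)→a then f→1
lemma tend_one {f : ℕ → ℝ} {a : ℝ}
    (hf : Tendsto (fun μ : ℕ => (μ:ℝ) * (f μ - 1)) atTop (𝓝 a)) :
    Tendsto f atTop (𝓝 1) := by
  have h1 : Tendsto (fun μ : ℕ => (1:ℝ)/(μ:ℝ)) atTop (𝓝 0) :=
    tendsto_const_nhds.div_atTop tendsto_natCast_atTop_atTop
  have h2 : Tendsto (fun μ : ℕ => ((μ:ℝ) * (f μ - 1)) * (1/(μ:ℝ)) + 1) atTop (𝓝 (a * 0 + 1)) :=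
    (hf.mul h1).add tendsto_const_nhds
  simp only [mul_zero, zero_add] at h2
  apply h2.congr'
  filter_upwards [eventually_gt_atTop 0] with μ hμ
  have : (μ:ℝ) ≠ 0 := Nat.cast_ne_zero.mpr hμ.ne'
  field_simp
  ring

lemma mul_aux {f g : ℕ → ℝ} {a b : ℝ}
    (hf : Tendsto (fun μ : ℕ => (μ:ℝ) * (f μ - 1)) atTop (𝓝 a))
    (hg : Tendsto (fun μ : ℕ => (μ:ℝ) * (g μ - 1)) atTop (𝓝 b)) :
    Tendsto (fun μ : ℕ => (μ:ℝ) * (f μ * g μ - 1)) atTop (𝓝 (a + b)) := by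
  have := (hf.mul (tend_one hg)).add hg
  simp only [mul_one] at this
  apply this.congr
  intro μ; ring

lemma prod_aux {ι : Type*} (s : Finset ι) (f : ι → ℕ → ℝ) (c : ι → ℝ)
    (hf : ∀ i ∈ s, Tendsto (fun μ : ℕ => (μ:ℝ) * (f i μ - 1)) atTop (𝓝 (c i))) :
    Tendsto (fun μ : ℕ => (μ:ℝ) * ((∏ i ∈ s, f i μ) - 1)) atTop (𝓝 (∑ i ∈ s, c i)) := by
  classical
  induction s using Finset.induction with
  | empty => simpa using tendsto_const_nhds
  | insert x s' hx ih =>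
    simp only [Finset.prod_insert hx, Finset.sum_insert hx]
    exact mul_aux (hf x (Finset.mem_insert_self x s'))
      (ih fun i hi => hf i (Finset.mem_insert_of_mem hi))

-- rpow factor
lemma rpow_aux (p : ℝ) :
    Tendsto (fun μ : ℕ => (μ:ℝ) * ((((μ:ℝ)+1)/(μ:ℝ)) ^ p - 1)) atTop (𝓝 p) := by
  have hd : HasDerivAt (fun x : ℝ => x ^ p) (p * (1:ℝ) ^ (p - 1)) 1 :=
    Real.hasDerivAt_rpow_const (Or.inl one_ne_zero)
  rw [Real.one_rpow, mul_one] at hd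
  rw [hasDerivAt_iff_tendsto_slope] at hd
  have hs := hd
  have harg : Tendsto (fun μ : ℕ => ((μ:ℝ)+1)/(μ:ℝ)) atTop (𝓝[≠] 1) := by
    rw [tendsto_nhdsWithin_iff]
    constructor
    · have h1 : Tendsto (fun μ : ℕ => 1 + (1:ℝ)/(μ:ℝ)) atTop (𝓝 (1 + 0)) :=
        tendsto_const_nhds.add (tendsto_const_nhds.div_atTop tendsto_natCast_atTop_atTop)
      rw [add_zero] at h1
      apply h1.congr'
      filter_upwards [eventually_gt_atTop 0] with μ hμ
      have : (μ:ℝ) ≠ 0 := Nat.cast_ne_zero.mpr hμ.ne'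
      field_simp
    · filter_upwards [eventually_gt_atTop 0] with μ hμ
      have h0 : (0:ℝ) < μ := Nat.cast_pos.mpr hμ
      simp only [Set.mem_compl_iff, Set.mem_singleton_iff]
      intro hc
      rw [div_eq_one_iff_eq h0.ne'] at hc
      linarith
  have := hs.comp harg
  have heq : ∀ᶠ μ : ℕ in atTop,
      (slope (fun x : ℝ => x ^ p) 1 ∘ fun μ : ℕ => ((μ:ℝ)+1)/(μ:ℝ)) μ
        = (μ:ℝ) * ((((μ:ℝ)+1)/(μ:ℝ)) ^ p - 1) := by
    filter_upwards [eventually_gt_atTop 0] with μ hμ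
    have h0 : (0:ℝ) < μ := Nat.cast_pos.mpr hμ
    have hne : ((μ:ℝ)+1)/(μ:ℝ) - 1 = 1/(μ:ℝ) := by field_simp; ring
    simp only [Function.comp_apply, slope_def_field, Real.one_rpow]
    rw [hne]
    rw [div_div_eq_mul_div, div_one]
    ring
  exact this.congr' heq

lemma gamma_ne_zero_of_re_pos' {z : ℂ} (hz : 0 < z.re) : Gamma z ≠ 0 := by
  apply Complex.Gamma_ne_zero
  intro m hm
  rw [hm] at hz
  simp only [Complex.neg_re, Complex.natCast_re] at hz
  have : (0:ℝ) ≤ m := Nat.cast_nonneg m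
  linarith

end aux

set_option maxHeartbeats 1000000 in
theorem stmt_8 (k : ℕ) (hk : 2 ≤ k) (h₀ : ℂ) (h : Fin k → ℂ)
    (hp0 : ∀ n : ℕ, h₀ ≠ -n) (hp : ∀ j, ∀ n : ℕ, h j ≠ -n)
    (hconv : 2 / ((k : ℝ) - 1) * ∑ j, (h j).re < 1 + h₀.re) :
    Summable (fun μ : ℕ =>
      ‖(h₀ + 2 * μ) * (Gamma (h₀ + μ) * ∏ j, Gamma (h j + μ)) /
          (∏ j, Gamma (1 + h₀ - h j + μ)) * (1 / (μ.factorial : ℂ)) *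
          (-1 : ℂ) ^ ((k + 1) * μ)‖) := by
  have hk1 : (0:ℝ) < (k:ℝ) - 1 := by
    have : (2:ℝ) ≤ k := by exact_mod_cast hk
    linarith
  set S : ℝ := ∑ j, (h j).re with hS
  set c : ℝ := 2*S - k - ((k:ℝ)-1)*h₀.re with hcdef
  have hc : c < -1 := by
    have h2S : 2*S < ((k:ℝ)-1)*(1+h₀.re) := by
      calc 2*S = 2/((k:ℝ)-1)*S*((k:ℝ)-1) := by field_simp
        _ < (1+h₀.re)*((k:ℝ)-1) := mul_lt_mul_of_pos_right hconv hk1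
        _ = ((k:ℝ)-1)*(1+h₀.re) := by ring
    nlinarith
  set p : ℝ := (1-c)/2 with hpdef
  have hp1 : 1 < p := by rw [hpdef]; linarith
  have hcp : c + p < 0 := by rw [hpdef]; linarith
  -- nonvanishing facts
  have hz0 : ∀ μ : ℕ, h₀ + (μ:ℂ) ≠ 0 := by
    intro μ hcon
    exact hp0 μ (by linear_combination hcon)
  have hz0' : ∀ μ : ℕ, h₀/2 + (μ:ℂ) ≠ 0 := by
    intro μ hcon
    apply hp0 (2*μ)
    push_cast
    linear_combination 2*hcon
  have hzj : ∀ j, ∀ μ : ℕ, h j + (μ:ℂ) ≠ 0 := by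
    intro j μ hcon
    exact hp j μ (by linear_combination hcon)
  have hμ1 : ∀ μ : ℕ, ((μ:ℂ) + 1) ≠ 0 := by
    intro μ
    have h' : ((μ+1:ℕ):ℂ) ≠ 0 := Nat.cast_ne_zero.mpr (Nat.succ_ne_zero μ)
    push_cast at h'
    exact h'
  -- the complex term without the sign
  set t : ℕ → ℂ := fun μ => (h₀ + 2 * μ) * (Gamma (h₀ + μ) * ∏ j, Gamma (h j + μ)) /
      (∏ j, Gamma (1 + h₀ - h j + μ)) * (1 / (μ.factorial : ℂ)) with ht
  -- the ratio
  set r : ℕ → ℝ := fun μ => (‖(h₀/2+1) + (μ:ℂ)‖/‖h₀/2 + (μ:ℂ)‖) *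
      ((‖h₀ + (μ:ℂ)‖/‖(1:ℂ) + (μ:ℂ)‖) * ∏ j, (‖h j + (μ:ℂ)‖/‖(1+h₀-h j) + (μ:ℂ)‖)) with hrdef
  -- limit of the normalized ratio
  have hf1 : Tendsto (fun μ : ℕ => (μ:ℝ) * (‖(h₀/2+1) + (μ:ℂ)‖/‖h₀/2 + (μ:ℂ)‖ - 1)) atTop
      (𝓝 1) := by
    have := L1 (h₀/2+1) (h₀/2)
    simpa using this
  have hf2 : Tendsto (fun μ : ℕ => (μ:ℝ) * (‖h₀ + (μ:ℂ)‖/‖(1:ℂ) + (μ:ℂ)‖ - 1)) atTop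
      (𝓝 (h₀.re - 1)) := by
    have := L1 h₀ 1
    simpa using this
  have hfj : Tendsto (fun μ : ℕ =>
      (μ:ℝ) * ((∏ j, (‖h j + (μ:ℂ)‖/‖(1+h₀-h j) + (μ:ℂ)‖)) - 1)) atTop
      (𝓝 (∑ j, ((h j).re - ((1:ℂ)+h₀-h j).re))) :=
    prod_aux Finset.univ _ _ (fun j _ => L1 (h j) (1+h₀-h j))
  have hr : Tendsto (fun μ : ℕ => (μ:ℝ) * (r μ * ((((μ:ℝ)+1)/(μ:ℝ)) ^ p) - 1)) atTop
      (𝓝 (c + p)) := by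
    have := mul_aux (mul_aux hf1 (mul_aux hf2 hfj)) (rpow_aux p)
    have hval : 1 + (h₀.re - 1 + ∑ j, ((h j).re - ((1:ℂ)+h₀-h j).re)) + p = c + p := by
      have hsum : ∑ j, ((h j).re - ((1:ℂ)+h₀-h j).re) = 2*S - k - k*h₀.re := by
        have : ∀ j : Fin k, (h j).re - ((1:ℂ)+h₀-h j).re = 2*(h j).re - 1 - h₀.re := by
          intro j; simp [Complex.add_re, Complex.sub_re, Complex.one_re]; ring
        rw [Finset.sum_congr rfl (fun j _ => this j)]
        rw [Finset.sum_sub_distrib, Finset.sum_sub_distrib, ← Finset.mul_sum,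
          Finset.sum_const, Finset.sum_const, Finset.card_univ, Fintype.card_fin, ← hS]
        push_cast [nsmul_eq_mul]
        ring
      rw [hsum, hcdef]
      ring
    rw [hval] at this
    exact this
  -- eventual comparison of the ratio
  have hrle : ∀ᶠ μ : ℕ in atTop, r μ ≤ ((μ:ℝ)/((μ:ℝ)+1)) ^ p := by
    filter_upwards [hr.eventually (eventually_lt_nhds hcp), eventually_gt_atTop 0]
      with μ hlt hμ
    have hμ' : (0:ℝ) < μ := Nat.cast_pos.mpr hμ
    have hRlt : r μ * ((((μ:ℝ)+1)/(μ:ℝ)) ^ p) < 1 := by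
      by_contra hcon
      push_neg at hcon
      have : (0:ℝ) ≤ (μ:ℝ) * (r μ * ((((μ:ℝ)+1)/(μ:ℝ)) ^ p) - 1) := by
        apply mul_nonneg hμ'.le
        linarith
      linarith
    have hpow : (0:ℝ) < (((μ:ℝ)+1)/(μ:ℝ)) ^ p := by positivity
    have hinv : ((μ:ℝ)/((μ:ℝ)+1)) ^ p = ((((μ:ℝ)+1)/(μ:ℝ)) ^ p)⁻¹ := by
      rw [← Real.inv_rpow (by positivity), inv_div]
    rw [hinv, ← one_div, le_div_iff₀ hpow]
    linarith
  -- goodness conditions eventually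
  have hgood : ∀ᶠ μ : ℕ in atTop, ∀ j : Fin k, 0 < ((1+h₀-h j + (μ:ℂ))).re := by
    rw [eventually_all]
    intro j
    have h1 : Tendsto (fun μ : ℕ => ((1+h₀-h j):ℂ).re + (μ:ℝ)) atTop atTop :=
      tendsto_atTop_add_const_left _ _ tendsto_natCast_atTop_atTop
    have h2 := h1.eventually_gt_atTop 0
    apply h2.mono
    intro μ hμ
    simpa [Complex.add_re] using hμ
  -- the recurrence
  have hrec : ∀ᶠ μ : ℕ in atTop, ‖t (μ+1)‖ = ‖t μ‖ * r μ := by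
    filter_upwards [hgood] with μ hg
    have hden : ∀ j : Fin k, (1 + h₀ - h j + (μ:ℂ)) ≠ 0 := by
      intro j hcon
      have := hg j
      rw [hcon] at this
      simp at this
    have hGden : ∀ j : Fin k, Gamma (1 + h₀ - h j + (μ:ℂ)) ≠ 0 :=
      fun j => gamma_ne_zero_of_re_pos' (hg j)
    have hQ : t (μ+1) = t μ * ((((h₀/2+1)+(μ:ℂ))/((h₀/2)+(μ:ℂ))) *
        (((h₀+(μ:ℂ))/((1:ℂ)+(μ:ℂ))) * ∏ j, ((h j+(μ:ℂ))/((1+h₀-h j)+(μ:ℂ))))) := by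
      have hPne : (∏ j, Gamma (1 + h₀ - h j + (μ:ℂ))) ≠ 0 :=
        Finset.prod_ne_zero_iff.mpr (fun j _ => hGden j)
      have hPne2 : (∏ j, (1 + h₀ - h j + (μ:ℂ))) ≠ 0 :=
        Finset.prod_ne_zero_iff.mpr (fun j _ => hden j)
      have hfact : (μ.factorial : ℂ) ≠ 0 := Nat.cast_ne_zero.mpr μ.factorial_ne_zero
      have h2 : (h₀/2 + (μ:ℂ)) ≠ 0 := hz0' μ
      have h1μ : ((1:ℂ) + (μ:ℂ)) ≠ 0 := by rw [add_comm]; exact hμ1 μ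
      simp only [ht]
      rw [Nat.factorial_succ]
      push_cast
      rw [show h₀ + ((μ:ℂ)+1) = (h₀ + μ) + 1 by ring, Complex.Gamma_add_one _ (hz0 μ)]
      have e2 : ∏ j, Gamma (h j + ((μ:ℂ)+1)) = (∏ j, (h j + (μ:ℂ))) * ∏ j, Gamma (h j + (μ:ℂ)) := by
        rw [← Finset.prod_mul_distrib]
        refine Finset.prod_congr rfl (fun j _ => ?_)
        rw [show h j + ((μ:ℂ)+1) = (h j + μ) + 1 by ring, Complex.Gamma_add_one _ (hzj j μ)]
      have e3 : ∏ j, Gamma (1 + h₀ - h j + ((μ:ℂ)+1)) =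
          (∏ j, (1 + h₀ - h j + (μ:ℂ))) * ∏ j, Gamma (1 + h₀ - h j + (μ:ℂ)) := by
        rw [← Finset.prod_mul_distrib]
        refine Finset.prod_congr rfl (fun j _ => ?_)
        rw [show 1 + h₀ - h j + ((μ:ℂ)+1) = (1 + h₀ - h j + μ) + 1 by ring,
          Complex.Gamma_add_one _ (hden j)]
      rw [e2, e3, Finset.prod_div_distrib]
      set m : ℂ := (μ:ℂ) with hm
      set G0 := Gamma (h₀ + m) with hG0
      set GP := ∏ j, Gamma (h j + m) with hGP
      set PP := ∏ j, Gamma (1 + h₀ - h j + m) with hPP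
      set A := ∏ j, (h j + m) with hA
      set B := ∏ j, (1 + h₀ - h j + m) with hB
      set F := (μ.factorial : ℂ) with hF
      have hm1 : m + 1 ≠ 0 := hμ1 μ
      have h2' : h₀ + 2*m ≠ 0 := by
        intro hcon
        apply hp0 (2*μ)
        push_cast
        rw [hm] at hcon
        linear_combination hcon
      have h1m : (1:ℂ) + m ≠ 0 := by rw [add_comm]; exact hμ1 μ
      have h2m : h₀/2 + m ≠ 0 := hz0' μ
      have efac : ((h₀/2+1)+m)/((h₀/2)+m) = (h₀+2*m+2)/(h₀+2*m) := by
        rw [div_eq_div_iff h2m h2']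
        ring
      rw [efac]
      field_simp
      ring
    rw [hQ, norm_mul, hrdef]
    congr 1
    simp only [norm_mul, norm_div, norm_prod]
  -- put all eventual facts together
  obtain ⟨N, hN⟩ := ((hrec.and hrle).and (eventually_ge_atTop 1)).exists_forall_of_atTop
  have hN1 : 1 ≤ N := (hN N le_rfl).2
  have key : ∀ μ, N ≤ μ → ‖t μ‖ * (μ:ℝ)^p ≤ ‖t N‖ * (N:ℝ)^p := by
    intro μ hμ
    induction μ, hμ using Nat.le_induction with
    | base => exact le_rfl
    | succ n hn ih =>
      obtain ⟨⟨hrec', hrle'⟩, hn1⟩ := hN n hn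
      have hn0 : (0:ℝ) < n := by exact_mod_cast Nat.lt_of_lt_of_le Nat.zero_lt_one hn1
      have hpos1 : (0:ℝ) < (n:ℝ)+1 := by linarith
      have hstep : ‖t (n+1)‖ * (((n+1:ℕ)):ℝ)^p ≤ ‖t n‖ * (n:ℝ)^p := by
        rw [hrec']
        push_cast
        have hmulpow : ((n:ℝ)/((n:ℝ)+1))^p * ((n:ℝ)+1)^p = (n:ℝ)^p := by
          rw [← Real.mul_rpow (by positivity) (by positivity), div_mul_cancel₀ _ hpos1.ne']
        calc ‖t n‖ * r n * ((n:ℝ)+1)^p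
            ≤ ‖t n‖ * (((n:ℝ)/((n:ℝ)+1))^p) * ((n:ℝ)+1)^p := by
              apply mul_le_mul_of_nonneg_right _ (Real.rpow_nonneg hpos1.le p)
              exact mul_le_mul_of_nonneg_left hrle' (norm_nonneg _)
          _ = ‖t n‖ * (n:ℝ)^p := by rw [mul_assoc, hmulpow]
      exact hstep.trans ih
  set C : ℝ := ‖t N‖ * (N:ℝ)^p with hC
  have hsum' : Summable (fun n : ℕ => C * ((((n+N:ℕ)):ℝ)^p)⁻¹) := by
    have := (Real.summable_nat_rpow_inv.mpr hp1).mul_left C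
    exact (summable_nat_add_iff N).mpr this
  have hts : Summable (fun μ : ℕ => ‖t μ‖) := by
    rw [← summable_nat_add_iff N]
    apply Summable.of_nonneg_of_le (fun n => norm_nonneg _) _ hsum'
    intro n
    have hkey := key (n+N) (Nat.le_add_left N n)
    have hnN : 0 < n + N := Nat.lt_of_lt_of_le Nat.zero_lt_one (Nat.le_add_left 1 n |>.trans (by omega))
    have hppos : (0:ℝ) < (((n+N:ℕ)):ℝ)^p := Real.rpow_pos_of_pos (by exact_mod_cast hnN) p
    rw [← le_div_iff₀ hppos] at hkey
    rw [div_eq_mul_inv] at hkey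
    exact hkey
  refine hts.congr fun b => ?_
  simp only [ht]
  rw [norm_mul _ ((-1:ℂ) ^ ((k+1)*b)), norm_pow, norm_neg, norm_one, one_pow, mul_one]
end

section
/- Let k ≥ 1 and let a₀, a₁, …, a_k, b₁, …, b_k be complex numbers with Re a_j > 0 and Re(b_j - a_j) > 0 for j = 1, …, k, and Re b_j > Re a₀ + Re a_j for all j. Then the multiple integral J_k(a;b) = ∫_{[0,1]^k} Π_{j=1}^k x_j^{a_j-1}(1-x_j)^{b_j-a_j-1} · Q_k(x₁,…,x_k)^{-a₀} dx₁⋯dx_k converges absolutely. -/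
open MeasureTheory

noncomputable def Q : ∀ k : ℕ, (Fin k → ℝ) → ℝ
  | 0, _ => 1
  | k + 1, x => 1 - x 0 * Q k (fun i => x i.succ)

lemma Q_bounds (k : ℕ) (x : Fin k → ℝ) (hx : ∀ i, 0 ≤ x i ∧ x i ≤ 1) :
    0 ≤ Q k x ∧ Q k x ≤ 1 ∧ ∏ i, (1 - x i) ≤ Q k x := by
  induction k with
  | zero => simp [Q]
  | succ n ih =>
    obtain ⟨h0, h1, hp⟩ := ih (fun i => x i.succ) (fun i => hx i.succ)
    obtain ⟨hx00, hx01⟩ := hx 0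
    have hmul : x 0 * Q n (fun i => x i.succ) ≤ 1 :=
      mul_le_one₀ hx01 h0 h1
    have hmul0 : 0 ≤ x 0 * Q n (fun i => x i.succ) := mul_nonneg hx00 h0
    refine ⟨by simp only [Q]; linarith, by simp only [Q]; linarith, ?_⟩
    have hprod : ∏ i : Fin (n + 1), (1 - x i)
        = (1 - x 0) * ∏ i : Fin n, (1 - x i.succ) := Fin.prod_univ_succ _
    have htail : ∏ i : Fin n, (1 - x i.succ) ≤ 1 :=
      Finset.prod_le_one (fun i _ => by linarith [(hx i.succ).2])
        (fun i _ => by linarith [(hx i.succ).1])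
    have htail0 : 0 ≤ ∏ i : Fin n, (1 - x i.succ) :=
      Finset.prod_nonneg (fun i _ => by linarith [(hx i.succ).2])
    have h2 : (1 - x 0) * ∏ i : Fin n, (1 - x i.succ) ≤ 1 - x 0 := by
      nlinarith
    have h3 : x 0 * Q n (fun i => x i.succ) ≤ x 0 := by nlinarith
    simp only [Q]
    rw [hprod]
    linarith

lemma Q_continuous (k : ℕ) : Continuous (Q k) := by
  induction k with
  | zero => simpa [Q] using continuous_const
  | succ n ih =>
    show Continuous fun x : Fin (n + 1) → ℝ => 1 - x 0 * Q n (fun i => x i.succ)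
    exact continuous_const.sub ((continuous_apply 0).mul
      (ih.comp (continuous_pi fun i => continuous_apply i.succ)))

theorem stmt_13 (k : ℕ) (hk : 1 ≤ k) (a₀ : ℂ) (a b : Fin k → ℂ)
    (ha : ∀ j, 0 < (a j).re) (hba : ∀ j, 0 < (b j - a j).re)
    (hb : ∀ j, a₀.re + (a j).re < (b j).re) :
    IntegrableOn
      (fun x : Fin k → ℝ =>
        (∏ j, (x j : ℂ) ^ (a j - 1) * ((1 : ℂ) - x j) ^ (b j - a j - 1)) *
          ((Q k x : ℝ) : ℂ) ^ (-a₀))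
      (Set.univ.pi fun _ => Set.Ioo (0 : ℝ) 1) := by
  set S : Set (Fin k → ℝ) := Set.univ.pi fun _ => Set.Ioo (0 : ℝ) 1 with hS
  have hSmeas : MeasurableSet S := MeasurableSet.univ_pi fun _ => measurableSet_Ioo
  have hSopen : IsOpen S := isOpen_set_pi Set.finite_univ fun _ _ => isOpen_Ioo
  set c : ℝ := max a₀.re 0 with hc
  have hc0 : 0 ≤ c := le_max_right _ _
  have hca : a₀.re ≤ c := le_max_left _ _
  -- the shifted exponents are positive
  have hpos : ∀ j, 0 < (b j - a j - (c : ℂ)).re := by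
    intro j
    simp only [Complex.sub_re, Complex.ofReal_re]
    rcases le_or_gt a₀.re 0 with h | h
    · have : c = 0 := max_eq_right h
      rw [this]
      simpa [Complex.sub_re] using hba j
    · have : c = a₀.re := max_eq_left h.le
      rw [this]
      have := hb j
      linarith
  -- the 1D majorant integrands
  set F : Fin k → ℝ → ℂ := fun j t =>
    (t : ℂ) ^ (a j - 1) * ((1 : ℂ) - t) ^ (b j - a j - (c : ℂ) - 1) with hF
  have hFint : ∀ j, IntegrableOn (F j) (Set.Ioo (0 : ℝ) 1) := by
    intro j
    have := Complex.betaIntegral_convergent (u := a j) (v := b j - a j - (c : ℂ))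
      (ha j) (hpos j)
    rw [intervalIntegrable_iff_integrableOn_Ioo_of_le (by norm_num)] at this
    exact this
  -- global majorant
  set g : Fin k → ℝ → ℝ := fun j t => ‖(Set.Ioo (0 : ℝ) 1).indicator (F j) t‖ with hg
  have hgint : ∀ j, Integrable (g j) :=
    fun j => ((hFint j).integrable_indicator measurableSet_Ioo).norm
  have hGint : Integrable (fun x : Fin k → ℝ => ∏ j, g j (x j)) :=
    Integrable.fin_nat_prod hgint
  refine Integrable.mono' (hGint.integrableOn) ?_ ?_
  · -- measurability: continuity on the open set S
    refine (ContinuousOn.aestronglyMeasurable ?_ hSmeas)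
    intro x hx
    have hx' : ∀ j, x j ∈ Set.Ioo (0 : ℝ) 1 := fun j => hx j (Set.mem_univ j)
    apply ContinuousAt.continuousWithinAt
    apply ContinuousAt.mul
    · refine tendsto_finset_prod _ fun j _ => ?_
      apply ContinuousAt.mul
      · exact (Complex.continuous_ofReal.comp (continuous_apply j)).continuousAt.cpow
          continuousAt_const
          (Complex.ofReal_mem_slitPlane.2 (hx' j).1)
      · refine ContinuousAt.cpow ?_ continuousAt_const ?_
        · exact (continuous_const.sub
            (Complex.continuous_ofReal.comp (continuous_apply j))).continuousAt
        · refine Complex.mem_slitPlane_iff.2 (Or.inl ?_)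
          simp only [Complex.sub_re, Complex.one_re, Complex.ofReal_re]
          linarith [(hx' j).2]
    · have hQpos : 0 < Q k x := by
        have hb := Q_bounds k x (fun i => ⟨(hx' i).1.le, (hx' i).2.le⟩)
        have : 0 < ∏ i, (1 - x i) :=
          Finset.prod_pos fun i _ => by linarith [(hx' i).2]
        linarith [hb.2.2]
      refine ContinuousAt.cpow ?_ continuousAt_const
        (Complex.ofReal_mem_slitPlane.2 hQpos)
      exact (Complex.continuous_ofReal.comp (Q_continuous k)).continuousAt
  · -- domination
    filter_upwards [ae_restrict_mem hSmeas] with x hx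
    have hx' : ∀ j, x j ∈ Set.Ioo (0 : ℝ) 1 := fun j => hx j (Set.mem_univ j)
    obtain ⟨hQ0, hQ1, hQp⟩ := Q_bounds k x (fun i => ⟨(hx' i).1.le, (hx' i).2.le⟩)
    have hprodpos : 0 < ∏ i, (1 - x i) :=
      Finset.prod_pos fun i _ => by linarith [(hx' i).2]
    have hQpos : 0 < Q k x := lt_of_lt_of_le hprodpos hQp
    -- rewrite both sides as products of rpow's
    have hnorm : ∀ j, ‖(x j : ℂ) ^ (a j - 1) * ((1 : ℂ) - (x j : ℂ)) ^ (b j - a j - 1)‖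
        = (x j) ^ ((a j).re - 1) * (1 - x j) ^ ((b j - a j).re - 1) := by
      intro j
      rw [norm_mul]
      have h1 : ‖(x j : ℂ) ^ (a j - 1)‖ = (x j) ^ ((a j).re - 1) := by
        rw [Complex.norm_cpow_eq_rpow_re_of_pos (hx' j).1]
        simp [Complex.sub_re]
      have h2 : ‖((1 : ℂ) - (x j : ℂ)) ^ (b j - a j - 1)‖
          = (1 - x j) ^ ((b j - a j).re - 1) := by
        have : ((1 : ℂ) - (x j : ℂ)) = ((1 - x j : ℝ) : ℂ) := by push_cast; ring
        rw [this,
          Complex.norm_cpow_eq_rpow_re_of_pos (by linarith [(hx' j).2])]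
        simp [Complex.sub_re]
      rw [h1, h2]
    have hnormF : ∀ j, ‖F j (x j)‖
        = (x j) ^ ((a j).re - 1) * (1 - x j) ^ ((b j - a j).re - c - 1) := by
      intro j
      rw [hF]
      simp only
      rw [norm_mul]
      have h1 : ‖(x j : ℂ) ^ (a j - 1)‖ = (x j) ^ ((a j).re - 1) := by
        rw [Complex.norm_cpow_eq_rpow_re_of_pos (hx' j).1]
        simp [Complex.sub_re]
      have h2 : ‖((1 : ℂ) - (x j : ℂ)) ^ (b j - a j - (c : ℂ) - 1)‖
          = (1 - x j) ^ ((b j - a j).re - c - 1) := by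
        have : ((1 : ℂ) - (x j : ℂ)) = ((1 - x j : ℝ) : ℂ) := by push_cast; ring
        rw [this,
          Complex.norm_cpow_eq_rpow_re_of_pos (by linarith [(hx' j).2])]
        simp [Complex.sub_re]
      rw [h1, h2]
    have hQnorm : ‖((Q k x : ℝ) : ℂ) ^ (-a₀)‖ = (Q k x) ^ (-a₀.re) := by
      rw [Complex.norm_cpow_eq_rpow_re_of_pos hQpos]
      simp
    -- key inequality: Q ^ (-a₀.re) ≤ ∏ (1 - x j) ^ (-c)
    have hkey : (Q k x) ^ (-a₀.re) ≤ ∏ j, (1 - x j) ^ (-c) := by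
      have h1 : (Q k x) ^ (-a₀.re) ≤ (Q k x) ^ (-c) :=
        Real.rpow_le_rpow_of_exponent_ge hQpos hQ1 (by linarith)
      have h2 : (Q k x) ^ (-c) ≤ (∏ j, (1 - x j)) ^ (-c) :=
        Real.rpow_le_rpow_of_nonpos hprodpos hQp (by linarith)
      have h3 : (∏ j, (1 - x j)) ^ (-c) = ∏ j, (1 - x j) ^ (-c) :=
        (Real.finset_prod_rpow _ _ (fun j _ => by linarith [(hx' j).2]) _).symm
      linarith [h3 ▸ h2]
    -- put everything together
    rw [norm_mul, norm_prod]
    simp_rw [hnorm]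
    rw [hQnorm]
    have hRHS : ∏ j, g j (x j)
        = ∏ j, (x j) ^ ((a j).re - 1) * (1 - x j) ^ ((b j - a j).re - c - 1) := by
      refine Finset.prod_congr rfl fun j _ => ?_
      rw [hg]
      simp only [Set.indicator_of_mem (hx' j)]
      exact hnormF j
    rw [hRHS]
    have hsplit : ∀ j, (x j) ^ ((a j).re - 1) * (1 - x j) ^ ((b j - a j).re - c - 1)
        = ((x j) ^ ((a j).re - 1) * (1 - x j) ^ ((b j - a j).re - 1))
          * (1 - x j) ^ (-c) := by
      intro j
      have h1xj : (0 : ℝ) < 1 - x j := by linarith [(hx' j).2]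
      rw [mul_assoc, ← Real.rpow_add h1xj]
      ring_nf
    calc (∏ j, (x j) ^ ((a j).re - 1) * (1 - x j) ^ ((b j - a j).re - 1))
          * (Q k x) ^ (-a₀.re)
        ≤ (∏ j, (x j) ^ ((a j).re - 1) * (1 - x j) ^ ((b j - a j).re - 1))
          * ∏ j, (1 - x j) ^ (-c) := by
          refine mul_le_mul_of_nonneg_left hkey ?_
          refine Finset.prod_nonneg fun j _ => mul_nonneg
            (Real.rpow_nonneg (hx' j).1.le _)
            (Real.rpow_nonneg (by linarith [(hx' j).2]) _)
      _ = ∏ j, (x j) ^ ((a j).re - 1) * (1 - x j) ^ ((b j - a j).re - c - 1) := by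
          rw [← Finset.prod_mul_distrib]
          exact Finset.prod_congr rfl fun j _ => (hsplit j).symm
end
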